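/- Let f be a probability density on ℝ^d, let α ∈ L²(f) with ∫ α f = 0, and let k(u) = 1/2 + (1 + e^{−4u})^{−1}. Then the normalising constant of the perturbed density satisfies ∫ k(t α(x)) f(x) dx − 1 = o(t²) as t → 0; that is, lim_{t→0} t^{−2} ( ∫ k(t α(x)) f(x) dx − 1 ) = 0. -/

import Mathlib

open MeasureTheory Filter

/-- The perturbation function `k(u) = 1/2 + (1 + e^{−4u})⁻¹`. -/
noncomputable def kFun (u : ℝ) : ℝ := 1 / 2 + (1 + Real.exp (-4 * u))⁻¹


noncomputable def hAux (u : ℝ) : ℝ := kFun u - 1 - u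

noncomputable def tAux (u : ℝ) : ℝ :=
  (1 - Real.exp (-4 * u)) / (1 + Real.exp (-4 * u))

lemma one_add_exp_pos (u : ℝ) : 0 < 1 + Real.exp (-4 * u) := by positivity

lemma sinh_le_mul_cosh {y : ℝ} (hy : 0 ≤ y) : Real.sinh y ≤ y * Real.cosh y := by
  have key : ∀ z : ℝ,
      HasDerivAt (fun w => w * Real.cosh w - Real.sinh w) (z * Real.sinh z) z := by
    intro z
    have h1 : HasDerivAt (fun w : ℝ => w * Real.cosh w)
        (1 * Real.cosh z + z * Real.sinh z) z :=
      (hasDerivAt_id z).mul (Real.hasDerivAt_cosh z)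
    have h2 : HasDerivAt (fun w => w * Real.cosh w - Real.sinh w)
        (1 * Real.cosh z + z * Real.sinh z - Real.cosh z) z := h1.sub (Real.hasDerivAt_sinh z)
    convert h2 using 1; ring
  have mono : MonotoneOn (fun w => w * Real.cosh w - Real.sinh w) (Set.Ici (0:ℝ)) := by
    apply monotoneOn_of_deriv_nonneg (convex_Ici 0)
    · exact (Continuous.sub (continuous_id.mul Real.continuous_cosh)
        Real.continuous_sinh).continuousOn
    · intro z _
      exact (key z).differentiableAt.differentiableWithinAt
    · intro z hz
      rw [interior_Ici] at hz
      rw [(key z).deriv]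
      exact mul_nonneg hz.le (Real.sinh_nonneg_iff.mpr hz.le)
  have h0 := mono Set.self_mem_Ici (Set.mem_Ici.mpr hy) hy
  simpa using h0

lemma tAux_eq_tanh (u : ℝ) : tAux u = Real.sinh (2 * u) / Real.cosh (2 * u) := by
  have ha : Real.exp (-4 * u) = Real.exp (-(2 * u)) * Real.exp (-(2 * u)) := by
    rw [← Real.exp_add]; ring_nf
  have hb : Real.exp (2 * u) * Real.exp (-(2 * u)) = 1 := by
    rw [← Real.exp_add]; simp
  rw [tAux, Real.sinh_eq, Real.cosh_eq, ha]
  set a := Real.exp (2 * u)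
  set b := Real.exp (-(2 * u))
  have hb0 : 0 < b := Real.exp_pos _
  have ha0 : 0 < a := Real.exp_pos _
  rw [div_eq_div_iff (by positivity) (by positivity)]
  linear_combination -b * hb

lemma tAux_neg (u : ℝ) : tAux (-u) = - tAux u := by
  have h1 : (-4:ℝ) * -u = -(-4 * u) := by ring
  rw [tAux, tAux, h1, Real.exp_neg]
  set E := Real.exp (-4 * u)
  have hE : 0 < E := Real.exp_pos _
  have h2 : (0:ℝ) < 1 + E := by positivity
  rw [eq_comm, neg_eq_iff_eq_neg, ← neg_div, div_eq_div_iff h2.ne' (by positivity)]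
  field_simp
  ring

lemma abs_tAux_le_one (u : ℝ) : |tAux u| ≤ 1 := by
  rw [tAux, abs_div]
  have h := one_add_exp_pos u
  rw [abs_of_pos h, div_le_one h]
  have := Real.exp_pos (-4 * u)
  rw [abs_le]; constructor <;> nlinarith

lemma abs_tAux_le (u : ℝ) : |tAux u| ≤ 2 * |u| := by
  have base : ∀ v : ℝ, 0 ≤ v → |tAux v| ≤ 2 * |v| := by
    intro v hv
    have hc := Real.cosh_pos (2 * v)
    have hs : Real.sinh (2 * v) ≤ 2 * v * Real.cosh (2 * v) :=
      sinh_le_mul_cosh (by linarith)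
    have hsn : 0 ≤ Real.sinh (2 * v) := Real.sinh_nonneg_iff.mpr (by linarith)
    rw [abs_of_nonneg hv, tAux_eq_tanh,
      abs_of_nonneg (div_nonneg hsn hc.le), div_le_iff₀ hc]
    exact hs
  rcases le_or_gt 0 u with hu | hu
  · exact base u hu
  · have h := base (-u) (by linarith)
    rw [tAux_neg, abs_neg, abs_neg] at h
    exact h

lemma hasDerivAt_hAux (u : ℝ) : HasDerivAt hAux (-(tAux u)^2) u := by
  have hE := Real.exp_pos (-4 * u)
  have hne : (1 + Real.exp (-4 * u)) ≠ 0 := (one_add_exp_pos u).ne'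
  have h1 : HasDerivAt (fun w : ℝ => -4 * w) (-4) u := by
    simpa using (hasDerivAt_id u).const_mul (-4 : ℝ)
  have h2 : HasDerivAt (fun w : ℝ => Real.exp (-4 * w)) (Real.exp (-4 * u) * -4) u :=
    (Real.hasDerivAt_exp _).comp u h1
  have h3 : HasDerivAt (fun w : ℝ => 1 + Real.exp (-4 * w)) (Real.exp (-4 * u) * -4) u :=
    h2.const_add 1
  have h4 : HasDerivAt (fun w : ℝ => (1 + Real.exp (-4 * w))⁻¹)
      (-(Real.exp (-4 * u) * -4) / (1 + Real.exp (-4 * u)) ^ 2) u := h3.inv hne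
  have h5 : HasDerivAt kFun (-(Real.exp (-4 * u) * -4) / (1 + Real.exp (-4 * u)) ^ 2) u :=
    h4.const_add (1 / 2)
  have h6 : HasDerivAt (fun w => kFun w - 1 - w)
      (-(Real.exp (-4 * u) * -4) / (1 + Real.exp (-4 * u)) ^ 2 - 1) u :=
    (h5.sub_const 1).sub (hasDerivAt_id u)
  have heq : -(tAux u) ^ 2
      = -(Real.exp (-4 * u) * -4) / (1 + Real.exp (-4 * u)) ^ 2 - 1 := by
    rw [tAux]
    set E := Real.exp (-4 * u)
    have h2 : (0:ℝ) < 1 + E := one_add_exp_pos u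
    field_simp
    ring
  rw [heq]
  exact h6

lemma hAux_zero : hAux 0 = 0 := by
  simp [hAux, kFun]
  norm_num

lemma abs_hAux_le_abs (u : ℝ) : |hAux u| ≤ |u| := by
  have key := Convex.norm_image_sub_le_of_norm_hasDerivWithin_le
    (f := hAux) (f' := fun w => -(tAux w)^2) (C := 1)
    (fun x _ => (hasDerivAt_hAux x).hasDerivWithinAt)
    (fun x _ => by
      rw [Real.norm_eq_abs, abs_neg, abs_pow, ← one_pow 2]
      exact pow_le_pow_left₀ (abs_nonneg _) (abs_tAux_le_one x) 2)
    (convex_uIcc 0 u) Set.left_mem_uIcc Set.right_mem_uIcc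
  simpa [hAux_zero] using key

lemma abs_hAux_le_cube (u : ℝ) : |hAux u| ≤ 4 * |u| ^ 3 := by
  have key := Convex.norm_image_sub_le_of_norm_hasDerivWithin_le
    (f := hAux) (f' := fun w => -(tAux w)^2) (C := 4 * |u| ^ 2)
    (fun x _ => (hasDerivAt_hAux x).hasDerivWithinAt)
    (fun x hx => by
      rw [Real.norm_eq_abs, abs_neg, abs_pow]
      have hxu : |x| ≤ |u| := by
        rcases Set.mem_uIcc.mp hx with ⟨h1, h2⟩ | ⟨h1, h2⟩
        · rw [abs_of_nonneg h1, abs_of_nonneg (le_trans h1 h2)]; linarith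
        · rw [abs_of_nonpos h2, abs_of_nonpos (le_trans h1 h2)]; linarith
      have h2 := abs_tAux_le x
      nlinarith [abs_nonneg (tAux x), abs_nonneg x])
    (convex_uIcc 0 u) Set.left_mem_uIcc Set.right_mem_uIcc
  rw [hAux_zero] at key
  simp only [sub_zero, Real.norm_eq_abs] at key
  calc |hAux u| ≤ 4 * |u| ^ 2 * |u| := key
  _ = 4 * |u| ^ 3 := by ring

lemma abs_hAux_le_sq (u : ℝ) : |hAux u| ≤ 2 * u ^ 2 := by
  rcases le_or_gt |u| (1/2) with h | h
  · have h3 := abs_hAux_le_cube u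
    nlinarith [abs_nonneg u, sq_abs u]
  · have h1 := abs_hAux_le_abs u
    nlinarith [sq_abs u, abs_nonneg u]

lemma continuous_hAux : Continuous hAux := by
  have h1 : Continuous fun u : ℝ => (1 + Real.exp (-4 * u))⁻¹ :=
    (continuous_const.add (Real.continuous_exp.comp
      (continuous_const.mul continuous_id))).inv₀ fun u => (one_add_exp_pos u).ne'
  unfold hAux kFun
  exact ((continuous_const.add h1).sub continuous_const).sub continuous_id

/-- The normalising constant of the perturbed density satisfies
`∫ k(t α(x)) f(x) dx − 1 = o(t²)` as `t → 0`, for any mean-zero `α ∈ L²(f)`. -/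
theorem perturbation_normalising_constant
    (d : ℕ) (hd : 2 ≤ d)
    (μ : Measure (Fin d → ℝ)) [IsProbabilityMeasure μ]
    (α : (Fin d → ℝ) → ℝ) (hα : MemLp α 2 μ) (hα0 : ∫ x, α x ∂μ = 0) :
    Tendsto (fun t : ℝ => ((∫ x, kFun (t * α x) ∂μ) - 1) / t ^ 2)
      (nhdsWithin 0 {(0 : ℝ)}ᶜ) (nhds 0) := by
  have hαm : AEStronglyMeasurable α μ := hα.aestronglyMeasurable
  have hα1 : Integrable α μ := hα.integrable one_le_two
  have hα2 : Integrable (fun x => (α x) ^ 2) μ := hα.integrable_sq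
  have hmeas : ∀ t : ℝ, AEStronglyMeasurable (fun x => hAux (t * α x)) μ := fun t =>
    continuous_hAux.comp_aestronglyMeasurable (hαm.const_mul t)
  have hint : ∀ t : ℝ, Integrable (fun x => hAux (t * α x)) μ := by
    intro t
    refine (hα2.const_mul (2 * t ^ 2)).mono (hmeas t) ?_
    filter_upwards with x
    rw [Real.norm_eq_abs, Real.norm_eq_abs]
    calc |hAux (t * α x)| ≤ 2 * (t * α x) ^ 2 := abs_hAux_le_sq _
    _ = 2 * t ^ 2 * α x ^ 2 := by ring
    _ ≤ |2 * t ^ 2 * α x ^ 2| := le_abs_self _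
  have key : ∀ t : ℝ, (∫ x, kFun (t * α x) ∂μ) - 1 = ∫ x, hAux (t * α x) ∂μ := by
    intro t
    have hrw : (fun x => kFun (t * α x)) = fun x => (1 + t * α x) + hAux (t * α x) := by
      funext x; rw [hAux]; ring
    have e1 : ∫ x, ((1 + t * α x) + hAux (t * α x)) ∂μ
        = (∫ x, (1 + t * α x) ∂μ) + ∫ x, hAux (t * α x) ∂μ :=
      integral_add ((integrable_const 1).add (hα1.const_mul t)) (hint t)
    have e2 : ∫ x, (1 + t * α x) ∂μ = (∫ _x, (1:ℝ) ∂μ) + ∫ x, t * α x ∂μ :=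
      integral_add (integrable_const 1) (hα1.const_mul t)
    rw [hrw, e1, e2, integral_const_mul, hα0]
    simp
  have hcong : (fun t : ℝ => ((∫ x, kFun (t * α x) ∂μ) - 1) / t ^ 2)
      = fun t : ℝ => ∫ x, hAux (t * α x) / t ^ 2 ∂μ := by
    funext t; rw [key t, integral_div]
  rw [hcong]
  have main : Tendsto (fun t : ℝ => ∫ x, hAux (t * α x) / t ^ 2 ∂μ)
      (nhdsWithin 0 {(0 : ℝ)}ᶜ) (nhds (∫ _x, (0:ℝ) ∂μ)) := by
    apply tendsto_integral_filter_of_dominated_convergence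
      (bound := fun x => 2 * (α x) ^ 2)
    · filter_upwards with t
      simpa [div_eq_mul_inv] using (hmeas t).mul_const ((t:ℝ)^2)⁻¹
    · filter_upwards [eventually_mem_nhdsWithin] with t ht
      have ht0 : t ≠ 0 := ht
      have ht2 : (0:ℝ) < t ^ 2 := by positivity
      filter_upwards with x
      rw [Real.norm_eq_abs, abs_div, abs_of_pos ht2, div_le_iff₀ ht2]
      calc |hAux (t * α x)| ≤ 2 * (t * α x) ^ 2 := abs_hAux_le_sq _
      _ = 2 * α x ^ 2 * t ^ 2 := by ring
    · exact hα2.const_mul 2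
    · filter_upwards with x
      apply squeeze_zero_norm' (a := fun t : ℝ => 4 * |α x| ^ 3 * |t|)
      · filter_upwards [eventually_mem_nhdsWithin] with t ht
        have ht0 : t ≠ 0 := ht
        have ht2 : (0:ℝ) < t ^ 2 := by positivity
        have habs3 : |t| ^ 3 = |t| * t ^ 2 := by
          rw [pow_succ, sq_abs]; ring
        rw [Real.norm_eq_abs, abs_div, abs_of_pos ht2, div_le_iff₀ ht2]
        calc |hAux (t * α x)| ≤ 4 * |t * α x| ^ 3 := abs_hAux_le_cube _
        _ = 4 * (|t| ^ 3 * |α x| ^ 3) := by rw [abs_mul]; ring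
        _ = 4 * |α x| ^ 3 * |t| * t ^ 2 := by rw [habs3]; ring
      · have h0 : Tendsto (fun t : ℝ => 4 * |α x| ^ 3 * |t|) (nhds 0)
            (nhds (4 * |α x| ^ 3 * |(0:ℝ)|)) :=
          (continuous_const.mul continuous_abs).tendsto 0
        simpa using h0.mono_left nhdsWithin_le_nhds
  simpa using main
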